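/- Let μ ∈ (1/2, 1) and x, y > 0 satisfy √(y/x) ≤ ((1−μ)/μ)·(1+(√x+√y)²), and set a₁ = ((2−μ)/μ)·x, b₁ = ((1−μ)/μ)·√(x/y)·(1+x+y), c₁ = 1+x, and t = (−b₁ + √(b₁² + 4a₁c₁)) / (2a₁). Then a₁ + b₁ ≥ c₁, and consequently t ≤ 1. -/

import Mathlib

/-- Under the region-`K₃` condition `√(y/x) ≤ ((1−μ)/μ)(1+(√x+√y)²)`, the
quadratic-formula value `t = (−b₁+√(b₁²+4a₁c₁))/(2a₁)` of Case 8 satisfies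
`a₁ + b₁ ≥ c₁` and consequently `t ≤ 1`. -/
theorem mode3_K3_feasibility
    (μ x y : ℝ) (hμ : μ ∈ Set.Ioo (1/2 : ℝ) 1) (hx : 0 < x) (hy : 0 < y)
    (hcond : Real.sqrt (y / x)
      ≤ (1 - μ) / μ * (1 + (Real.sqrt x + Real.sqrt y) ^ 2)) :
    let a₁ : ℝ := (2 - μ) / μ * x
    let b₁ : ℝ := (1 - μ) / μ * Real.sqrt (x / y) * (1 + x + y)
    let c₁ : ℝ := 1 + x
    let t : ℝ := (-b₁ + Real.sqrt (b₁ ^ 2 + 4 * a₁ * c₁)) / (2 * a₁)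
    a₁ + b₁ ≥ c₁ ∧ t ≤ 1 := by
  intro a₁ b₁ c₁ t
  obtain ⟨hμ1, hμ2⟩ := hμ
  have hμ0 : 0 < μ := by linarith
  have hk : 0 < (1 - μ) / μ := div_pos (by linarith) hμ0
  have hsx : 0 < Real.sqrt x := Real.sqrt_pos.mpr hx
  have hsy : 0 < Real.sqrt y := Real.sqrt_pos.mpr hy
  have hx2 : Real.sqrt x ^ 2 = x := Real.sq_sqrt hx.le
  have hy2 : Real.sqrt y ^ 2 = y := Real.sq_sqrt hy.le
  have hdyx : Real.sqrt (y / x) = Real.sqrt y / Real.sqrt x := Real.sqrt_div hy.le x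
  have hdxy : Real.sqrt (x / y) = Real.sqrt x / Real.sqrt y := Real.sqrt_div hx.le y
  rw [hdyx] at hcond
  rw [div_le_iff₀ hsx] at hcond
  -- key : 1 ≤ b₁ + 2 * ((1-μ)/μ) * x
  have key : 1 ≤ b₁ + 2 * ((1 - μ) / μ) * x := by
    show (1 : ℝ) ≤ (1 - μ) / μ * Real.sqrt (x / y) * (1 + x + y) + 2 * ((1 - μ) / μ) * x
    rw [hdxy, ← mul_le_mul_iff_right₀ hsy]
    have expand : Real.sqrt y * ((1 - μ) / μ * (Real.sqrt x / Real.sqrt y) * (1 + x + y)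
          + 2 * ((1 - μ) / μ) * x)
        = (1 - μ) / μ * Real.sqrt x * (1 + x + y)
          + 2 * ((1 - μ) / μ) * x * Real.sqrt y := by
      field_simp
    rw [expand, mul_one]
    have e2 : (1 - μ) / μ * (1 + (Real.sqrt x + Real.sqrt y) ^ 2) * Real.sqrt x
        = (1 - μ) / μ * Real.sqrt x * (1 + x + y)
          + 2 * ((1 - μ) / μ) * x * Real.sqrt y := by
      linear_combination ((1 - μ) / μ * Real.sqrt x + 2 * ((1 - μ) / μ) * Real.sqrt y) * hx2
        + ((1 - μ) / μ * Real.sqrt x) * hy2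
    linarith [e2 ▸ hcond]
  have ha1 : a₁ = x + 2 * ((1 - μ) / μ) * x := by
    show (2 - μ) / μ * x = x + 2 * ((1 - μ) / μ) * x
    field_simp
    ring
  have hb1 : 0 ≤ b₁ := by
    have : 0 ≤ Real.sqrt (x / y) := Real.sqrt_nonneg _
    have h1 : 0 < 1 + x + y := by linarith
    positivity
  have hfeas : a₁ + b₁ ≥ c₁ := by
    show a₁ + b₁ ≥ 1 + x
    rw [ha1]; linarith
  refine ⟨hfeas, ?_⟩
  have ha1pos : 0 < a₁ := by
    have : 0 < (2 - μ) / μ := div_pos (by linarith) hμ0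
    exact mul_pos this hx
  have hc1pos : 0 < c₁ := by show (0:ℝ) < 1 + x; linarith
  have hsqle : Real.sqrt (b₁ ^ 2 + 4 * a₁ * c₁) ≤ 2 * a₁ + b₁ := by
    have h1 : b₁ ^ 2 + 4 * a₁ * c₁ ≤ (2 * a₁ + b₁) ^ 2 := by nlinarith
    calc Real.sqrt (b₁ ^ 2 + 4 * a₁ * c₁) ≤ Real.sqrt ((2 * a₁ + b₁) ^ 2) :=
          Real.sqrt_le_sqrt h1
      _ = 2 * a₁ + b₁ := by
          rw [Real.sqrt_sq (by linarith)]
  show (-b₁ + Real.sqrt (b₁ ^ 2 + 4 * a₁ * c₁)) / (2 * a₁) ≤ 1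
  rw [div_le_one (by linarith)]
  linarith
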